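/- Let X^{αβ} be a nonzero skew-symmetric 2-tensor on ℂ⁴ that is 'real' in the sense that X^{αγ}·conj(X)_{βγ} is a scalar multiple of the identity, where conj is a pseudo-hermitian conjugation of signature (2,2) composed with Hodge duality. If additionally ξ := X^{αβ}·conj(X)_{αβ} = 0, then X∧X = 0, i.e., X lies on the Klein quadric. -/

import Mathlib

open Finset

/-- The Levi-Civita symbol `ε_{abcd}` on `Fin 4`, via the product-of-differences
formula. -/
noncomputable def eps4 (a b c d : Fin 4) : ℂ :=
  ((((d : ℤ) - c) * ((d : ℤ) - b) * ((d : ℤ) - a) * ((c : ℤ) - b) * ((c : ℤ) - a) *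
      ((b : ℤ) - a) : ℤ) : ℂ) / 12

/-- The signs of the (2,2)-signature conjugation on the orthonormal basis. -/
noncomputable def sgn4 : Fin 4 → ℂ := ![1, 1, -1, -1]

/-- The conjugate skew tensor with lowered indices:
`conj(X)_{αβ} = ε_α ε_β · conj(X^{αβ})`. -/
noncomputable def Xlow (X : Fin 4 → Fin 4 → ℂ) (a b : Fin 4) : ℂ :=
  sgn4 a * sgn4 b * star (X a b)

/-- The real invariant `ξ = X^{αβ}·conj(X)_{αβ}`. -/
noncomputable def xiInv (X : Fin 4 → Fin 4 → ℂ) : ℂ :=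
  ∑ a, ∑ b, X a b * Xlow X a b

lemma sgn4_ne (a : Fin 4) : sgn4 a ≠ 0 := by
  fin_cases a <;> norm_num [sgn4]

set_option maxHeartbeats 1000000 in
lemma detlem (p q r s t u : ℂ) :
    (Matrix.of !![0,p,q,r; -p,0,s,t; -q,-s,0,u; -r,-t,-u,0]).det
      = (p*u - q*t + r*s)^2 := by
  simp [Matrix.det_succ_row_zero, Fin.sum_univ_succ,
    show ((1:Fin 4).succAbove 2)=3 from rfl, show ((2:Fin 4).succAbove 2)=3 from rfl,
    show (Fin.castSucc (2:Fin 3) : Fin 4)=2 from rfl, show ((3:Fin 4).succAbove 2)=2 from rfl,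
    show ∀ (A : Matrix (Fin 4) (Fin 4) ℂ) i j, Matrix.of A i j = A i j from fun _ _ _ => rfl]
  ring

set_option maxHeartbeats 2000000 in
/-- If a nonzero skew tensor `X^{αβ}` is real, i.e.
`X^{αγ}·conj(X)_{βγ} = (ξ/4)·δ^α_β`, and `ξ = 0`, then `X∧X = 0`:
`X` lies on the Klein quadric. -/
theorem stmt8 (X : Fin 4 → Fin 4 → ℂ) (hX : X ≠ 0)
    (hskew : ∀ a b, X b a = -X a b)
    (hreal : ∀ a b, (∑ c, X a c * Xlow X b c) =
      (xiInv X / 4) * (if a = b then 1 else 0))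
    (hxi : xiInv X = 0) :
    (1 / 2 : ℂ) * ∑ a, ∑ b, ∑ c, ∑ d, eps4 a b c d * X a b * X c d = 0 := by
  classical
  have hd0 : ∀ i, X i i = 0 := fun i => by
    have h := hskew i i; linear_combination h / 2
  have e10 : X 1 0 = -X 0 1 := hskew 0 1
  have e20 : X 2 0 = -X 0 2 := hskew 0 2
  have e30 : X 3 0 = -X 0 3 := hskew 0 3
  have e21 : X 2 1 = -X 1 2 := hskew 1 2
  have e31 : X 3 1 = -X 1 3 := hskew 1 3
  have e32 : X 3 2 = -X 2 3 := hskew 2 3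
  set M : Matrix (Fin 4) (Fin 4) ℂ := Matrix.of X with hM
  set N : Matrix (Fin 4) (Fin 4) ℂ := Matrix.of (fun c b => Xlow X b c) with hN
  have hMN : M * N = 0 := by
    ext a b
    have := hreal a b
    rw [hxi] at this
    simpa [Matrix.mul_apply, hM, hN] using this
  have hNne : N ≠ 0 := by
    intro h
    apply hX
    funext a b
    have h0 : Xlow X a b = 0 := by
      have := congrFun (congrFun h b) a
      simpa [hN] using this
    simpa [Xlow, mul_eq_zero, sgn4_ne a, sgn4_ne b, star_eq_zero] using h0
  have hdet : M.det = 0 := by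
    by_contra hd
    apply hNne
    calc N = (M⁻¹ * M) * N := by
            rw [Matrix.nonsing_inv_mul M (isUnit_iff_ne_zero.mpr hd)]; simp
    _ = M⁻¹ * (M * N) := by rw [Matrix.mul_assoc]
    _ = 0 := by rw [hMN]; simp
  have hMlit : M = Matrix.of !![0, X 0 1, X 0 2, X 0 3;
      -(X 0 1), 0, X 1 2, X 1 3;
      -(X 0 2), -(X 1 2), 0, X 2 3;
      -(X 0 3), -(X 1 3), -(X 2 3), 0] := by
    ext i j
    fin_cases i <;> fin_cases j <;>
      simp [hM, e10, e20, e30, e21, e31, e32, hd0,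
        show ∀ (A : Matrix (Fin 4) (Fin 4) ℂ) i j, Matrix.of A i j = A i j from fun _ _ _ => rfl]
  rw [hMlit, detlem] at hdet
  have hP : X 0 1 * X 2 3 - X 0 2 * X 1 3 + X 0 3 * X 1 2 = 0 :=
    pow_eq_zero_iff (by norm_num) |>.mp hdet
  simp only [Fin.sum_univ_four, eps4, show ((0:Fin 4):ℤ)=0 from rfl,
    show ((1:Fin 4):ℤ)=1 from rfl, show ((2:Fin 4):ℤ)=2 from rfl,
    show ((3:Fin 4):ℤ)=3 from rfl, e10, e20, e30, e21, e31, e32, hd0]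
  push_cast
  linear_combination (4:ℂ) * hP
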